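/- Let k ≥ 1 and let γ = k(3k−2); note (2k)² − ((k+1)² − 1) = k(3k−2). Let S₁, …, S_c be independent random variables, each uniformly distributed on the s-element subsets of a set of (2k)² elements (the shares of a 2k × 2k extended matrix), with 0 < s ≤ (2k)². Then the probability that |S₁ ∪ ⋯ ∪ S_c| ≥ γ equals 1 − Σ_{i=1}^{(2k)²−λ} (−1)^{i−1} · C(λ+i−1, λ) · C((2k)², λ+i) · (C((2k)²−λ−i, s)/C((2k)², s))^c, where λ = (k+1)² − 1 and C denotes the binomial coefficient with C(a, b) = 0 for b > a. -/

import Mathlib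

open Finset

private lemma alt_sum (r t : ℕ) (hr : 1 ≤ r) :
    ∑ j ∈ range (t+1), (-1:ℤ)^j * (r.choose j) = (-1)^t * ((r-1).choose t) := by
  induction t with
  | zero => simp
  | succ t ih =>
    rw [sum_range_succ, ih]
    obtain ⟨r, rfl⟩ : ∃ r', r = r' + 1 := ⟨r - 1, by omega⟩
    simp only [Nat.add_sub_cancel]
    rw [Nat.choose_succ_succ' r t]
    push_cast
    ring

private lemma tri (m l i : ℕ) (hi : 1 ≤ i) :
    ((l+i-1).choose l) * (m.choose (l+i-1)) = m.choose l * ((m-l).choose (i-1)) := by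
  rcases le_or_gt (l+i-1) m with h | h
  · have h2 := Nat.choose_mul (n := m) (k := l+i-1) (s := l) (by omega)
    rw [mul_comm, h2, show l + i - 1 - l = i - 1 from by omega]
  · rw [Nat.choose_eq_zero_of_lt h, mul_zero]
    rcases le_or_gt l m with h2 | h2
    · rw [Nat.choose_eq_zero_of_lt (show m - l < i - 1 by omega), mul_zero]
    · rw [Nat.choose_eq_zero_of_lt h2, zero_mul]

private lemma euler_ind (l N : ℕ) : ∀ m, m ≤ l + N →
    (∑ i ∈ Icc 1 N, (-1:ℤ)^(i-1) * ((l+i-1).choose l) * (m.choose (l+i)))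
      = if l+1 ≤ m then 1 else 0 := by
  intro m
  induction m with
  | zero =>
    intro _
    rw [if_neg (by omega)]
    refine sum_eq_zero fun i hi => ?_
    simp only [mem_Icc] at hi
    rw [show (0:ℕ).choose (l+i) = 0 from Nat.choose_eq_zero_of_lt (by omega)]
    simp
  | succ m ih =>
    intro hm
    have key : ∀ i ∈ Icc 1 N, (-1:ℤ)^(i-1) * ((l+i-1).choose l) * ((m+1).choose (l+i))
        = (-1:ℤ)^(i-1) * ((l+i-1).choose l) * (m.choose (l+i))
          + (-1:ℤ)^(i-1) * ((m.choose l) * ((m-l).choose (i-1))) := by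
      intro i hi
      simp only [mem_Icc] at hi
      have h1 : l + i = (l + i - 1) + 1 := by omega
      have hc : (m+1).choose (l+i) = m.choose (l+i-1) + m.choose (l+i) := by
        rw [h1, Nat.choose_succ_succ' m (l+i-1), ← h1]
      rw [hc]
      have h2' : ((l+i-1).choose l : ℤ) * (m.choose (l+i-1))
          = (m.choose l) * ((m-l).choose (i-1)) := by exact_mod_cast tri m l i hi.1
      push_cast
      linear_combination ((-1:ℤ))^(i-1) * h2'
    rw [sum_congr rfl key, sum_add_distrib, ih (by omega)]
    have hG : ∑ i ∈ Icc 1 N, (-1:ℤ)^(i-1) * ((m.choose l) * ((m-l).choose (i-1)))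
        = (m.choose l : ℤ) * ∑ j ∈ range N, (-1:ℤ)^j * ((m-l).choose j) := by
      rw [mul_sum, show Icc 1 N = Ico 1 (N+1) from by rw [Finset.Ico_add_one_right_eq_Icc],
        Finset.sum_Ico_eq_sum_range]
      simp only [Nat.add_sub_cancel]
      refine sum_congr rfl fun j _ => ?_
      simp only [Nat.add_sub_cancel_left, show 1 + j - 1 = j from by omega]
      ring
    rw [hG]
    rcases lt_trichotomy m l with h | h | h
    · rw [Nat.choose_eq_zero_of_lt h]
      push_cast
      rw [if_neg (by omega), if_neg (by omega)]
      ring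
    · subst h
      have hN : 1 ≤ N := by omega
      have : ∑ j ∈ range N, (-1:ℤ)^j * ((m-m).choose j) = 1 := by
        rw [Finset.sum_eq_single_of_mem 0 (mem_range.mpr hN)]
        · simp
        · intro j _ hj
          rw [Nat.sub_self, Nat.choose_eq_zero_of_lt (by omega)]
          simp
      rw [this, if_neg (by omega), if_pos (by omega)]
      simp
    · have hN : 1 ≤ N := by omega
      obtain ⟨N', rfl⟩ : ∃ N', N = N' + 1 := ⟨N - 1, by omega⟩
      rw [alt_sum (m-l) N' (by omega)]
      rw [Nat.choose_eq_zero_of_lt (show m - l - 1 < N' by omega)]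
      rw [if_pos (by omega), if_pos (by omega)]
      ring

private lemma pi_card {α : Type*} [Fintype α] [DecidableEq α] (s c : ℕ) :
    ((univ : Finset (Fin c → Finset α)).filter (fun f => ∀ i, (f i).card = s)).card
      = ((Fintype.card α).choose s)^c := by
  have h : (univ : Finset (Fin c → Finset α)).filter (fun f => ∀ i, (f i).card = s)
      = Fintype.piFinset (fun _ : Fin c => powersetCard s (univ : Finset α)) := by
    ext f
    simp [mem_powersetCard, subset_univ]
  rw [h, Fintype.card_piFinset]
  simp [card_powersetCard]

private lemma count_lemma {α : Type*} [Fintype α] [DecidableEq α] (s c j : ℕ) :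
    ∑ f ∈ (univ : Finset (Fin c → Finset α)).filter (fun f => ∀ i, (f i).card = s),
        ((univ.biUnion f)ᶜ.card.choose j)
      = (Fintype.card α).choose j * (((Fintype.card α) - j).choose s)^c := by
  set F := (univ : Finset (Fin c → Finset α)).filter (fun f => ∀ i, (f i).card = s) with hF
  have step1 : ∀ W : Finset α, W.card.choose j
      = ∑ T ∈ powersetCard j (univ : Finset α), if T ⊆ W then 1 else 0 := by
    intro W
    have hPW : (powersetCard j (univ : Finset α)).filter (fun T => T ⊆ W)
        = powersetCard j W := by
      ext T
      simp only [mem_filter, mem_powersetCard, subset_univ, true_and]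
      tauto
    rw [← Finset.card_filter, hPW, card_powersetCard]
  calc ∑ f ∈ F, ((univ.biUnion f)ᶜ.card.choose j)
      = ∑ f ∈ F, ∑ T ∈ powersetCard j (univ : Finset α),
          if T ⊆ (univ.biUnion f)ᶜ then 1 else 0 := sum_congr rfl fun f _ => step1 _
    _ = ∑ T ∈ powersetCard j (univ : Finset α), ∑ f ∈ F,
          if T ⊆ (univ.biUnion f)ᶜ then 1 else 0 := sum_comm
    _ = ∑ T ∈ powersetCard j (univ : Finset α),
          (((Fintype.card α) - j).choose s)^c := by
        refine sum_congr rfl fun T hT => ?_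
        rw [← Finset.card_filter]
        have hTc : T.card = j := (mem_powersetCard.mp hT).2
        have hset : F.filter (fun f => T ⊆ (univ.biUnion f)ᶜ)
            = Fintype.piFinset (fun _ : Fin c => powersetCard s Tᶜ) := by
          ext f
          simp only [hF, filter_filter, mem_filter, mem_univ, true_and,
            Fintype.mem_piFinset, mem_powersetCard]
          constructor
          · rintro ⟨h1, h2⟩ i
            exact ⟨(Finset.biUnion_subset.mp (Finset.subset_compl_comm.mp h2)) i (mem_univ i),
              h1 i⟩
          · intro h
            refine ⟨fun i => (h i).2, Finset.subset_compl_comm.mpr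
              (Finset.biUnion_subset.mpr fun i _ => (h i).1)⟩
        rw [hset, Fintype.card_piFinset]
        simp [card_powersetCard, card_compl, hTc]
    _ = (Fintype.card α).choose j * (((Fintype.card α) - j).choose s)^c := by
        rw [sum_const, card_powersetCard, card_univ, smul_eq_mul]

/-- Corollary of Euler's formula for the `2k × 2k` extended matrix: with
`λ = (k+1)² − 1` and `γ = k(3k−2) = (2k)² − λ`, if `c` light clients each
independently sample a uniformly random `s`-element subset of the `(2k)²`
shares, the probability that they collectively obtain at least `γ` distinct
shares equals
`1 − Σ_{i=1}^{(2k)²−λ} (−1)^{i−1} C(λ+i−1, λ) C((2k)², λ+i) (C((2k)²−λ−i, s)/C((2k)², s))^c`. -/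
theorem stmt8 {α : Type*} [Fintype α] [DecidableEq α]
    (k s c : ℕ) (hk : 1 ≤ k) (hcard : Fintype.card α = (2 * k) ^ 2)
    (hs : 0 < s) (hsn : s ≤ (2 * k) ^ 2) :
    (2 * k) ^ 2 - ((k + 1) ^ 2 - 1) = k * (3 * k - 2) ∧
    ((((Finset.univ : Finset (Fin c → Finset α)).filter
        (fun f => (∀ i, (f i).card = s) ∧
          k * (3 * k - 2) ≤ ((Finset.univ : Finset (Fin c)).biUnion f).card)).card : ℝ) /
      (((Finset.univ : Finset (Fin c → Finset α)).filter
        (fun f => ∀ i, (f i).card = s)).card : ℝ)) =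
    1 - ∑ i ∈ Finset.Icc 1 ((2 * k) ^ 2 - ((k + 1) ^ 2 - 1)),
      (-1 : ℝ) ^ (i - 1) * ((((k + 1) ^ 2 - 1) + i - 1).choose ((k + 1) ^ 2 - 1) : ℝ) *
        (((2 * k) ^ 2).choose (((k + 1) ^ 2 - 1) + i) : ℝ) *
        ((((2 * k) ^ 2 - ((k + 1) ^ 2 - 1) - i).choose s : ℝ) /
          (((2 * k) ^ 2).choose s : ℝ)) ^ c := by
  have h1 : (2*k)^2 - ((k+1)^2 - 1) = k * (3*k - 2) := by
    obtain ⟨k', rfl⟩ : ∃ k', k = k' + 1 := ⟨k - 1, by omega⟩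
    have e2 : (k'+1+1)^2 - 1 = k'*k' + 4*k' + 3 := by
      rw [show (k'+1+1)^2 = (k'*k' + 4*k' + 3) + 1 from by ring, Nat.add_sub_cancel]
    have e3 : 3*(k'+1) - 2 = 3*k' + 1 := by omega
    rw [e2, e3]
    rw [show (2*(k'+1))^2 = ((k'+1)*(3*k'+1)) + (k'*k' + 4*k' + 3) from by ring,
      Nat.add_sub_cancel]
  have hln : (k+1)^2 - 1 < (2*k)^2 := by
    obtain ⟨k', rfl⟩ : ∃ k', k = k' + 1 := ⟨k - 1, by omega⟩
    have e2 : (k'+1+1)^2 - 1 = k'*k' + 4*k' + 3 := by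
      rw [show (k'+1+1)^2 = (k'*k' + 4*k' + 3) + 1 from by ring, Nat.add_sub_cancel]
    rw [e2, show (2*(k'+1))^2 = (k'*k' + 4*k' + 3) + (3*(k'*k') + 4*k' + 1) from by ring]
    exact Nat.lt_add_of_pos_right (by positivity)
  refine ⟨h1, ?_⟩
  classical
  set n := (2*k)^2 with hn
  set l := (k+1)^2 - 1 with hl
  rw [← h1]
  set F := (univ : Finset (Fin c → Finset α)).filter (fun f => ∀ i, (f i).card = s) with hFdef
  have hF : F.card = (n.choose s)^c := by
    rw [hFdef, pi_card s c, hcard]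
  rw [← filter_filter]
  rw [← hFdef]
  set A := F.filter (fun f => n - l ≤ ((univ : Finset (Fin c)).biUnion f).card) with hAdef
  -- the key integer identity
  have hS : ∑ i ∈ Icc 1 (n-l), (-1:ℤ)^(i-1) * ((l+i-1).choose l) *
        ((n.choose (l+i)) * (((n-l-i).choose s)^c))
      = ∑ f ∈ F, if l + 1 ≤ ((univ : Finset (Fin c)).biUnion f)ᶜ.card then (1:ℤ) else 0 := by
    have step : ∀ i ∈ Icc 1 (n-l),
        (-1:ℤ)^(i-1) * ((l+i-1).choose l) * ((n.choose (l+i)) * (((n-l-i).choose s)^c))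
        = ∑ f ∈ F, (-1:ℤ)^(i-1) * ((l+i-1).choose l) *
            (((univ.biUnion f)ᶜ.card.choose (l+i)) : ℤ) := by
      intro i hi
      rw [← Finset.mul_sum]
      congr 1
      have hcl := count_lemma (α := α) s c (l+i)
      rw [hcard] at hcl
      rw [Nat.sub_add_eq n l i] at hcl
      rw [← hFdef] at hcl
      exact_mod_cast hcl.symm
    rw [sum_congr rfl step, sum_comm]
    refine sum_congr rfl fun f _ => ?_
    have hW : ((univ : Finset (Fin c)).biUnion f)ᶜ.card ≤ n := by
      rw [← hcard]; exact card_le_univ _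
    exact euler_ind l (n - l) (((univ : Finset (Fin c)).biUnion f)ᶜ.card) (by omega)
  have hsplit : (∑ f ∈ F, if l + 1 ≤ ((univ : Finset (Fin c)).biUnion f)ᶜ.card
        then (1:ℤ) else 0)
      = ((F.filter (fun f => l + 1 ≤ ((univ : Finset (Fin c)).biUnion f)ᶜ.card)).card : ℤ) := by
    rw [Finset.sum_boole]
  have hcompl : F.filter (fun f => l + 1 ≤ ((univ : Finset (Fin c)).biUnion f)ᶜ.card)
      = F.filter (fun f => ¬ (n - l ≤ ((univ : Finset (Fin c)).biUnion f).card)) := by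
    refine filter_congr fun f _ => ?_
    have hUc : ((univ : Finset (Fin c)).biUnion f).card ≤ n := by
      rw [← hcard]; exact card_le_univ _
    rw [card_compl, hcard]
    constructor <;> intro <;> omega
  have hsum2 : (F.filter (fun f => ¬ (n - l ≤ ((univ : Finset (Fin c)).biUnion f).card))).card
      = F.card - A.card := by
    have := Finset.card_filter_add_card_filter_not (s := F)
      (p := fun f => n - l ≤ ((univ : Finset (Fin c)).biUnion f).card)
    rw [← hAdef] at this
    omega
  have hA_le : A.card ≤ F.card := by rw [hAdef]; exact card_filter_le _ _
  have hZ : (A.card : ℤ) = (F.card : ℤ) - ∑ i ∈ Icc 1 (n-l),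
      (-1:ℤ)^(i-1) * ((l+i-1).choose l) * ((n.choose (l+i)) * (((n-l-i).choose s)^c)) := by
    rw [hS, hsplit, hcompl, hsum2, Nat.cast_sub hA_le]
    ring
  -- pass to the reals
  have hR : (A.card : ℝ) = (F.card : ℝ) - ∑ i ∈ Icc 1 (n-l),
      (-1:ℝ)^(i-1) * ((l+i-1).choose l) * ((n.choose (l+i)) * (((n-l-i).choose s)^c)) := by
    exact_mod_cast hZ
  have hchoose : (0:ℝ) < (n.choose s : ℝ) := by
    exact_mod_cast Nat.choose_pos hsn
  have hFne : (F.card : ℝ) ≠ 0 := by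
    rw [hF]; push_cast; positivity
  rw [hR, sub_div, div_self hFne]
  congr 1
  rw [sum_div]
  refine sum_congr rfl fun i hi => ?_
  rw [hF]
  push_cast
  rw [div_pow]
  field_simp
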